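/- arXiv:2312.03953 — 3 statements merged into one kernel-verified Lean document; each statement's English description precedes it below -/
import Mathlib

section
/- Let (m_N) be a sequence of measurable functions on R^n with 0 ≤ m_N ≤ 1 pointwise and ∫ m_N = C for all N, where C > 0 is a fixed constant. Let f be a measurable function on R^n with f = f² almost everywhere and ∫ f = C. If ⟨φ, m_N⟩ → ⟨φ, f⟩ for every test function φ ∈ L¹(R^n) + L^∞(R^n) (in particular for φ = f), then m_N → f strongly in L²(R^n). -/
open MeasureTheory Filter Topology

/-- If `0 ≤ m_N ≤ 1`, `∫ m_N = C`, `f = f²` a.e., `∫ f = C`, and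
`⟨φ, m_N⟩ → ⟨φ, f⟩` for every test function `φ ∈ L¹ + L^∞`, then `m_N → f` in `L²`. -/
theorem stmt0 {n : ℕ} (C : ℝ) (hC : 0 < C)
    (m : ℕ → EuclideanSpace ℝ (Fin n) → ℝ) (f : EuclideanSpace ℝ (Fin n) → ℝ)
    (hm_meas : ∀ N, Measurable (m N))
    (hm01 : ∀ N z, 0 ≤ m N z ∧ m N z ≤ 1)
    (hm_int : ∀ N, Integrable (m N) volume)
    (hm_mass : ∀ N, ∫ z, m N z = C)
    (hf_meas : Measurable f)
    (hf_sq : ∀ᵐ z ∂(volume : Measure (EuclideanSpace ℝ (Fin n))), f z = (f z) ^ 2)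
    (hf_int : Integrable f volume)
    (hf_mass : ∫ z, f z = C)
    (hweak : ∀ φ : EuclideanSpace ℝ (Fin n) → ℝ,
      (MemLp φ 1 volume ∨ MemLp φ ⊤ volume) →
        Tendsto (fun N => ∫ z, φ z * m N z) atTop (𝓝 (∫ z, φ z * f z))) :
    Tendsto (fun N => eLpNorm (fun z => m N z - f z) 2 volume) atTop (𝓝 0) := by
  -- integrability facts
  have hIm2 : ∀ N, Integrable (fun z => m N z ^ 2) volume := by
    intro N
    refine (hm_int N).mono ((hm_meas N).pow measurable_const).aestronglyMeasurable ?_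
    filter_upwards with z
    have h0 := (hm01 N z).1
    have h1 := (hm01 N z).2
    rw [Real.norm_eq_abs, Real.norm_eq_abs, abs_of_nonneg h0, abs_of_nonneg (by positivity)]
    nlinarith
  have hIfm : ∀ N, Integrable (fun z => f z * m N z) volume := by
    intro N
    refine hf_int.mono (hf_meas.mul (hm_meas N)).aestronglyMeasurable ?_
    filter_upwards with z
    have h0 := (hm01 N z).1
    have h1 := (hm01 N z).2
    rw [Real.norm_eq_abs, Real.norm_eq_abs, abs_mul]
    calc |f z| * |m N z| ≤ |f z| * 1 := by
          exact mul_le_mul_of_nonneg_left (by rw [abs_of_nonneg h0]; exact h1) (abs_nonneg _)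
      _ = |f z| := mul_one _
  have hIf2 : Integrable (fun z => f z ^ 2) volume := hf_int.congr hf_sq
  have hf2_mass : (∫ z, f z ^ 2) = C := by
    rw [← integral_congr_ae hf_sq]; exact hf_mass
  -- weak convergence of ∫ f m_N to C
  have hfm : Tendsto (fun N => ∫ z, f z * m N z) atTop (𝓝 C) := by
    have := hweak f (Or.inl (memLp_one_iff_integrable.mpr hf_int))
    have h2 : (∫ z, f z * f z) = C := by
      rw [← hf2_mass]; congr 1; ext z; ring
    rwa [h2] at this
  -- integral of square tends to 0
  have hA : ∀ N, Integrable (fun z => m N z ^ 2 - 2 * (f z * m N z)) volume := fun N =>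
    (hIm2 N).sub ((hIfm N).const_mul 2)
  have hIsq : ∀ N, Integrable (fun z => (m N z - f z) ^ 2) volume := by
    intro N
    have h : (fun z => (m N z - f z) ^ 2)
        = fun z => (m N z ^ 2 - 2 * (f z * m N z)) + f z ^ 2 := by
      ext z; ring
    rw [h]
    exact (hA N).add hIf2
  have hexp : ∀ N, (∫ z, (m N z - f z) ^ 2)
      = (∫ z, m N z ^ 2) - 2 * (∫ z, f z * m N z) + C := by
    intro N
    have h : (fun z => (m N z - f z) ^ 2)
        = fun z => (m N z ^ 2 - 2 * (f z * m N z)) + f z ^ 2 := by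
      ext z; ring
    rw [h, integral_add (hA N) hIf2,
      integral_sub (hIm2 N) ((hIfm N).const_mul 2), integral_const_mul, hf2_mass]
  have hm2_le : ∀ N, (∫ z, m N z ^ 2) ≤ C := by
    intro N
    rw [← hm_mass N]
    refine integral_mono (hIm2 N) (hm_int N) ?_
    intro z
    have h0 := (hm01 N z).1
    have h1 := (hm01 N z).2
    show m N z ^ 2 ≤ m N z
    nlinarith
  have hub : ∀ N, (∫ z, (m N z - f z) ^ 2) ≤ 2 * C - 2 * (∫ z, f z * m N z) := by
    intro N
    have := hm2_le N
    rw [hexp N]; linarith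
  have hlb : ∀ N, 0 ≤ ∫ z, (m N z - f z) ^ 2 := fun N =>
    integral_nonneg fun z => sq_nonneg _
  have hub_tendsto : Tendsto (fun N => 2 * C - 2 * (∫ z, f z * m N z)) atTop (𝓝 0) := by
    have h0 : (2 * C - 2 * C : ℝ) = 0 := by ring
    have h := (tendsto_const_nhds.sub (hfm.const_mul 2) :
      Tendsto (fun N => 2 * C - 2 * (∫ z, f z * m N z)) atTop (𝓝 (2 * C - 2 * C)))
    rwa [h0] at h
  have hsq : Tendsto (fun N => ∫ z, (m N z - f z) ^ 2) atTop (𝓝 0) :=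
    tendsto_of_tendsto_of_tendsto_of_le_of_le tendsto_const_nhds hub_tendsto hlb hub
  -- convert to eLpNorm
  have hlint : ∀ N, eLpNorm (fun z => m N z - f z) 2 volume
      = (ENNReal.ofReal (∫ z, (m N z - f z) ^ 2)) ^ (1 / 2 : ℝ) := by
    intro N
    rw [eLpNorm_eq_lintegral_rpow_enorm_toReal (by norm_num) (by norm_num)]
    have hpt : ∀ z : EuclideanSpace ℝ (Fin n),
        (‖m N z - f z‖ₑ) ^ (ENNReal.toReal 2)
          = ENNReal.ofReal ((m N z - f z) ^ 2) := by
      intro z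
      rw [ENNReal.toReal_ofNat, ← ofReal_norm,
        ENNReal.ofReal_rpow_of_nonneg (norm_nonneg _) (by norm_num)]
      congr 1
      rw [Real.norm_eq_abs, Real.rpow_two, sq_abs]
    rw [lintegral_congr hpt,
      ← ofReal_integral_eq_lintegral_ofReal (hIsq N)
        (Filter.Eventually.of_forall fun z => sq_nonneg _)]
    norm_num
  have hfin : Tendsto (fun N => (ENNReal.ofReal (∫ z, (m N z - f z) ^ 2)) ^ (1 / 2 : ℝ))
      atTop (𝓝 0) := by
    have h1 : Tendsto (fun N => ENNReal.ofReal (∫ z, (m N z - f z) ^ 2)) atTop (𝓝 0) := by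
      have := (ENNReal.continuous_ofReal.tendsto 0).comp hsq
      simpa [Function.comp_def] using this
    have h2 : Continuous (fun x : ENNReal => x ^ (1 / 2 : ℝ)) :=
      ENNReal.continuous_rpow_const
    have := (h2.tendsto 0).comp h1
    simpa [ENNReal.zero_rpow_of_pos, Function.comp_def] using this
  exact Tendsto.congr (fun N => (hlint N).symm) hfin
end

section
/- Let (m_N) be a sequence of measurable functions on R^n with 0 ≤ m_N ≤ 1 and ∫ m_N = C, and let f satisfy f = f² a.e. with ∫ f = C. Suppose ‖m_N − f‖_{L²} → 0 and ⟨1 − f, m_N⟩ → 0. Then m_N → f strongly in L¹(R^n). -/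
open MeasureTheory Filter Topology

/-- If `0 ≤ m_N ≤ 1`, `∫ m_N = C`, `f = f²` a.e., `∫ f = C`,
`‖m_N − f‖_{L²} → 0` and `⟨1 − f, m_N⟩ → 0`, then `m_N → f` strongly in `L¹`. -/
theorem stmt1 {n : ℕ} (C : ℝ) (hC : 0 < C)
    (m : ℕ → EuclideanSpace ℝ (Fin n) → ℝ) (f : EuclideanSpace ℝ (Fin n) → ℝ)
    (hm_meas : ∀ N, Measurable (m N))
    (hm01 : ∀ N z, 0 ≤ m N z ∧ m N z ≤ 1)
    (hm_int : ∀ N, Integrable (m N) volume)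
    (hm_mass : ∀ N, ∫ z, m N z = C)
    (hf_meas : Measurable f)
    (hf_sq : ∀ᵐ z ∂(volume : Measure (EuclideanSpace ℝ (Fin n))), f z = (f z) ^ 2)
    (hf_int : Integrable f volume)
    (hf_mass : ∫ z, f z = C)
    (hL2 : Tendsto (fun N => eLpNorm (fun z => m N z - f z) 2 volume) atTop (𝓝 0))
    (hpair : Tendsto (fun N => ∫ z, (1 - f z) * m N z) atTop (𝓝 0)) :
    Tendsto (fun N => eLpNorm (fun z => m N z - f z) 1 volume) atTop (𝓝 0) := by
  -- f ∈ {0,1} a.e.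
  have hf01 : ∀ᵐ z ∂(volume : Measure (EuclideanSpace ℝ (Fin n))), f z = 0 ∨ f z = 1 := by
    filter_upwards [hf_sq] with z hz
    have : f z * (f z - 1) = 0 := by nlinarith
    rcases mul_eq_zero.1 this with h | h
    · exact Or.inl h
    · exact Or.inr (by linarith)
  -- integrability of f * m N
  have hfm_int : ∀ N, Integrable (fun z => f z * m N z) volume := by
    intro N
    refine Integrable.mono' hf_int ((hf_meas.mul (hm_meas N)).aestronglyMeasurable) ?_
    filter_upwards [hf01] with z hz
    have h1 := (hm01 N z).1
    have h2 := (hm01 N z).2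
    rcases hz with h | h <;> simp [h, abs_mul, abs_of_nonneg h1] <;> nlinarith [abs_nonneg (m N z)]
  -- the key identity for the integral of |m N - f|
  have key : ∀ N, (∫ z, |m N z - f z|) = 2 * ∫ z, (1 - f z) * m N z := by
    intro N
    have hsub : Integrable (fun z => m N z - f z) volume := (hm_int N).sub hf_int
    have h1 : (∫ z, |m N z - f z|)
        = ∫ z, ((f z - f z * m N z) + (1 - f z) * m N z) := by
      refine integral_congr_ae ?_
      filter_upwards [hf01] with z hz
      have h1 := (hm01 N z).1
      have h2 := (hm01 N z).2
      rcases hz with h | h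
      · rw [h]; rw [abs_of_nonneg (by linarith)]; ring
      · rw [h]; rw [abs_of_nonpos (by linarith)]; ring
    have hint1 : Integrable (fun z => f z - f z * m N z) volume :=
      hf_int.sub (hfm_int N)
    have hint2 : Integrable (fun z => (1 - f z) * m N z) volume := by
      have : (fun z => (1 - f z) * m N z) = fun z => m N z - f z * m N z := by
        funext z; ring
      rw [this]; exact (hm_int N).sub (hfm_int N)
    rw [h1, integral_add hint1 hint2, integral_sub hf_int (hfm_int N), hf_mass]
    have h2 : (∫ z, (1 - f z) * m N z) = C - ∫ z, f z * m N z := by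
      have : (fun z => (1 - f z) * m N z) = fun z => m N z - f z * m N z := by
        funext z; ring
      rw [this, integral_sub (hm_int N) (hfm_int N), hm_mass N]
    rw [h2]; ring
  -- eLpNorm 1 equals ofReal of the integral of |·|
  have heq : ∀ N, eLpNorm (fun z => m N z - f z) 1 volume
      = ENNReal.ofReal (2 * ∫ z, (1 - f z) * m N z) := by
    intro N
    have hsub : Integrable (fun z => m N z - f z) volume := (hm_int N).sub hf_int
    rw [eLpNorm_one_eq_lintegral_enorm, ← ofReal_integral_norm_eq_lintegral_enorm hsub]
    congr 1
    rw [← key N]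
    simp [Real.norm_eq_abs]
  simp_rw [heq]
  have : Tendsto (fun N => 2 * ∫ z, (1 - f z) * m N z) atTop (𝓝 0) := by
    simpa using hpair.const_mul 2
  have := (ENNReal.continuous_ofReal.tendsto 0).comp this
  simpa [Function.comp_def] using this
end

section
/- Let f ∈ L²(R^n) with f = f² a.e. and ∫ f = c², and let (f_N) ⊂ L²(R^n) with ‖f_N‖_{L²} = c for all N and ‖f_N − f‖_{L²} → 0. Then limsup_N ‖f − f_N‖_{L¹} = limsup_N ‖f_N‖_{L¹} − c², where all L¹ norms of f_N are allowed to be +∞. In particular, f_N → f in L¹ if and only if ‖f_N‖_{L¹} → c². -/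
open MeasureTheory Filter Topology
open scoped ENNReal NNReal

private lemma aux_bdd (w : ℕ → ℝ≥0∞) : IsBoundedUnder (· ≤ ·) atTop w :=
  ⟨⊤, Eventually.of_forall fun _ => le_top⟩

private lemma aux_cobdd (w : ℕ → ℝ≥0∞) : IsCoboundedUnder (· ≤ ·) atTop w :=
  Filter.isCobounded_le_of_bot

/-- If `u → a` with `a ≠ ∞`, then `limsup (u + v) = a + limsup v` in `ℝ≥0∞`. -/
private lemma limsup_add_tendsto {u v : ℕ → ℝ≥0∞} {a : ℝ≥0∞} (ha : a ≠ ⊤)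
    (hu : Tendsto u atTop (𝓝 a)) :
    Filter.limsup (fun n => u n + v n) atTop = a + Filter.limsup v atTop := by
  apply le_antisymm
  · refine ENNReal.le_of_forall_pos_le_add fun ε hε _ => ?_
    have hlt : a < a + ε := ENNReal.lt_add_right ha (by exact_mod_cast hε.ne')
    have hev : ∀ᶠ n in atTop, u n ≤ a + ε := hu.eventually_le_const hlt
    calc Filter.limsup (fun n => u n + v n) atTop
        ≤ Filter.limsup (fun n => (a + ε) + v n) atTop :=
          limsup_le_limsup (hev.mono fun n h => add_le_add_left h _)
      _ = (a + ε) + Filter.limsup v atTop :=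
          limsup_const_add atTop v (a + ε) (aux_bdd v) (aux_cobdd v)
      _ = a + Filter.limsup v atTop + ε := by ring
  · refine ENNReal.le_of_forall_pos_le_add fun ε hε _ => ?_
    have hmem : {x : ℝ≥0∞ | a < x + ε} ∈ 𝓝 a := by
      have hopen : IsOpen {x : ℝ≥0∞ | a < x + ε} :=
        isOpen_Ioi.preimage (continuous_add_right (ε : ℝ≥0∞))
      exact hopen.mem_nhds (ENNReal.lt_add_right ha (by exact_mod_cast hε.ne'))
    have hev : ∀ᶠ n in atTop, a ≤ u n + ε := (hu.eventually hmem).mono fun n h => le_of_lt h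
    calc a + Filter.limsup v atTop
        = Filter.limsup (fun n => a + v n) atTop :=
          (limsup_const_add atTop v a (aux_bdd v) (aux_cobdd v)).symm
      _ ≤ Filter.limsup (fun n => (u n + ε) + v n) atTop :=
          limsup_le_limsup (hev.mono fun n h => add_le_add_left h _)
      _ = Filter.limsup (fun n => (u n + v n) + ε) atTop := by
          congr 1; funext n; ring
      _ = Filter.limsup (fun n => u n + v n) atTop + ε :=
          limsup_add_const atTop (fun n => u n + v n) (ε : ℝ≥0∞) (aux_bdd _) (aux_cobdd _)

/-- If `f = f²` a.e., `∫ f = c²`, `‖f_N‖_{L²} = c` and `‖f_N − f‖_{L²} → 0`,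
then `limsup ‖f − f_N‖_{L¹} = limsup ‖f_N‖_{L¹} − c²` (in extended reals); in particular
`f_N → f` in `L¹` iff `‖f_N‖_{L¹} → c²`. -/
theorem stmt11 {n : ℕ} (c : ℝ) (hc : 0 ≤ c)
    (f : EuclideanSpace ℝ (Fin n) → ℝ) (F : ℕ → EuclideanSpace ℝ (Fin n) → ℝ)
    (hfL2 : MemLp f 2 volume)
    (hfsq : ∀ᵐ z ∂(volume : Measure (EuclideanSpace ℝ (Fin n))), f z = f z ^ 2)
    (hfint : Integrable f volume) (hfmass : ∫ z, f z = c ^ 2)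
    (hFL2 : ∀ N, MemLp (F N) 2 volume)
    (hFnorm : ∀ N, eLpNorm (F N) 2 volume = ENNReal.ofReal c)
    (hconv : Tendsto (fun N => eLpNorm (fun z => F N z - f z) 2 volume) atTop (𝓝 0)) :
    Filter.limsup (fun N => eLpNorm (fun z => f z - F N z) 1 volume) atTop
        = Filter.limsup (fun N => eLpNorm (F N) 1 volume) atTop - ENNReal.ofReal (c ^ 2)
    ∧ (Tendsto (fun N => eLpNorm (fun z => F N z - f z) 1 volume) atTop (𝓝 0)
        ↔ Tendsto (fun N => eLpNorm (F N) 1 volume) atTop (𝓝 (ENNReal.ofReal (c ^ 2)))) := by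
  classical
  set μ : Measure (EuclideanSpace ℝ (Fin n)) := volume with hμ
  -- the "indicator" weight
  set φ : EuclideanSpace ℝ (Fin n) → ℝ≥0∞ := fun z => ENNReal.ofReal (f z) with hφdef
  have hφm : AEMeasurable φ μ := hfint.aemeasurable.ennreal_ofReal
  have h01 : ∀ᵐ z ∂μ, f z = 0 ∨ f z = 1 := by
    filter_upwards [hfsq] with z hz
    have : f z * (f z - 1) = 0 := by nlinarith
    rcases mul_eq_zero.1 this with h | h
    · exact Or.inl h
    · exact Or.inr (by linarith)
  have hfnn : 0 ≤ᵐ[μ] f := h01.mono fun z hz => by rcases hz with h | h <;> simp [h]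
  have hfm : AEStronglyMeasurable f μ := hfint.aestronglyMeasurable
  have hFm : ∀ N, AEStronglyMeasurable (F N) μ := fun N => (hFL2 N).aestronglyMeasurable
  -- abbreviations
  set A : ℕ → ℝ≥0∞ := fun N => ∫⁻ z, φ z * ‖f z - F N z‖₊ ∂μ with hAdef
  set B : ℕ → ℝ≥0∞ := fun N => ∫⁻ z, φ z * ‖F N z‖₊ ∂μ with hBdef
  set C : ℕ → ℝ≥0∞ := fun N => ∫⁻ z, (1 - φ z) * ‖F N z‖₊ ∂μ with hCdef
  have hAm : ∀ N, AEMeasurable (fun z => φ z * (‖f z - F N z‖₊ : ℝ≥0∞)) μ :=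
    fun N => hφm.mul (hfm.sub (hFm N)).enorm
  have hBm : ∀ N, AEMeasurable (fun z => φ z * (‖F N z‖₊ : ℝ≥0∞)) μ :=
    fun N => hφm.mul (hFm N).enorm
  -- ∫⁻ φ = c²
  have hIφ : ∫⁻ z, φ z ∂μ = ENNReal.ofReal (c ^ 2) := by
    rw [← hfmass]
    exact (ofReal_integral_eq_lintegral_ofReal hfint hfnn).symm
  have hφsq : ∀ᵐ z ∂μ, φ z ^ (2 : ℝ) = φ z := by
    filter_upwards [h01] with z hz
    rcases hz with h | h <;>
      simp [hφdef, h, ENNReal.zero_rpow_of_pos (by norm_num : (0:ℝ) < 2)]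
  have hIφ2 : ∫⁻ z, φ z ^ (2 : ℝ) ∂μ = ENNReal.ofReal (c ^ 2) := by
    rw [lintegral_congr_ae hφsq, hIφ]
  have hc2 : (ENNReal.ofReal (c ^ 2)) ^ ((1:ℝ)/2) = ENNReal.ofReal c := by
    rw [ENNReal.ofReal_rpow_of_nonneg (by positivity) (by norm_num)]
    congr 1
    rw [← Real.rpow_natCast c 2, ← Real.rpow_mul hc]
    norm_num
  have hconj : Real.HolderConjugate 2 2 := ⟨by norm_num, by norm_num, by norm_num⟩
  -- L² norms as lintegrals
  have hL2 : ∀ (g : EuclideanSpace ℝ (Fin n) → ℝ),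
      eLpNorm g 2 μ = (∫⁻ z, (‖g z‖₊ : ℝ≥0∞) ^ (2:ℝ) ∂μ) ^ ((1:ℝ)/2) := by
    intro g
    rw [eLpNorm_eq_lintegral_rpow_enorm_toReal (by norm_num) (by norm_num)]
    norm_num
    rfl
  -- Hölder bounds
  have hA_le : ∀ N, A N ≤ ENNReal.ofReal c * eLpNorm (fun z => f z - F N z) 2 μ := by
    intro N
    calc A N ≤ (∫⁻ z, φ z ^ (2:ℝ) ∂μ) ^ ((1:ℝ)/2) *
        (∫⁻ z, (‖f z - F N z‖₊ : ℝ≥0∞) ^ (2:ℝ) ∂μ) ^ ((1:ℝ)/2) :=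
          ENNReal.lintegral_mul_le_Lp_mul_Lq μ hconj hφm (hfm.sub (hFm N)).enorm
      _ = ENNReal.ofReal c * eLpNorm (fun z => f z - F N z) 2 μ := by
          rw [hIφ2, hc2, hL2]
  have hB_le : ∀ N, B N ≤ ENNReal.ofReal (c ^ 2) := by
    intro N
    calc B N ≤ (∫⁻ z, φ z ^ (2:ℝ) ∂μ) ^ ((1:ℝ)/2) *
        (∫⁻ z, (‖F N z‖₊ : ℝ≥0∞) ^ (2:ℝ) ∂μ) ^ ((1:ℝ)/2) :=
          ENNReal.lintegral_mul_le_Lp_mul_Lq μ hconj hφm (hFm N).enorm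
      _ = ENNReal.ofReal c * ENNReal.ofReal c := by
          rw [hIφ2, hc2, ← hL2, hFnorm N]
      _ = ENNReal.ofReal (c ^ 2) := by
          rw [← ENNReal.ofReal_mul hc]; ring_nf
  -- A → 0
  have h2comm : ∀ N, eLpNorm (fun z => f z - F N z) 2 μ
      = eLpNorm (fun z => F N z - f z) 2 μ := fun N => eLpNorm_sub_comm f (F N) 2 μ
  have hA0 : Tendsto A atTop (𝓝 0) := by
    have hupper : Tendsto (fun N => ENNReal.ofReal c * eLpNorm (fun z => f z - F N z) 2 μ)
        atTop (𝓝 0) := by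
      have := ENNReal.Tendsto.const_mul (a := ENNReal.ofReal c) hconv
        (Or.inr ENNReal.ofReal_ne_top)
      simpa [h2comm] using this
    exact tendsto_of_tendsto_of_tendsto_of_le_of_le tendsto_const_nhds hupper
      (fun N => zero_le) hA_le
  -- lower bound for B and B → c²
  have hB_low : ∀ N, ENNReal.ofReal (c ^ 2) ≤ B N + A N := by
    intro N
    have key : ∫⁻ z, φ z ∂μ ≤ B N + A N := by
      rw [← lintegral_add_left' (hBm N)]
      apply lintegral_mono_ae
      filter_upwards [h01] with z hz
      have htri : (‖f z‖₊ : ℝ≥0∞) ≤ ‖F N z‖₊ + ‖f z - F N z‖₊ := by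
        have h1 : f z = F N z + (f z - F N z) := by ring
        calc (‖f z‖₊ : ℝ≥0∞) = ‖F N z + (f z - F N z)‖₊ := by rw [← h1]
          _ ≤ ‖F N z‖₊ + ‖f z - F N z‖₊ := by
              exact_mod_cast nnnorm_add_le (F N z) (f z - F N z)
      have hφf : φ z = φ z * ‖f z‖₊ := by
        rcases hz with h | h <;> simp [hφdef, h]
      calc φ z = φ z * ‖f z‖₊ := hφf
        _ ≤ φ z * (‖F N z‖₊ + ‖f z - F N z‖₊) := mul_le_mul_right htri _
        _ = φ z * ‖F N z‖₊ + φ z * ‖f z - F N z‖₊ := by ring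
    rwa [hIφ] at key
  have hBc : Tendsto B atTop (𝓝 (ENNReal.ofReal (c ^ 2))) := by
    have hlow : Tendsto (fun N => ENNReal.ofReal (c ^ 2) - A N) atTop
        (𝓝 (ENNReal.ofReal (c ^ 2))) := by
      have := ENNReal.Tendsto.sub (tendsto_const_nhds
        (x := ENNReal.ofReal (c ^ 2)) (f := atTop)) hA0 (Or.inl ENNReal.ofReal_ne_top)
      simpa using this
    exact tendsto_of_tendsto_of_tendsto_of_le_of_le hlow tendsto_const_nhds
      (fun N => tsub_le_iff_right.mpr (hB_low N)) hB_le
  -- decompositions of the L¹ norms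
  have ha_eq : ∀ N, eLpNorm (fun z => f z - F N z) 1 μ = A N + C N := by
    intro N
    rw [eLpNorm_one_eq_lintegral_enorm, ← lintegral_add_left' (hAm N)]
    apply lintegral_congr_ae
    filter_upwards [h01] with z hz
    rcases hz with h | h <;> simp [hφdef, h] <;> rfl
  have hb_eq : ∀ N, eLpNorm (F N) 1 μ = B N + C N := by
    intro N
    rw [eLpNorm_one_eq_lintegral_enorm, ← lintegral_add_left' (hBm N)]
    apply lintegral_congr_ae
    filter_upwards [h01] with z hz
    rcases hz with h | h <;> simp [hφdef, h] <;> rfl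
  have ha_eq' : ∀ N, eLpNorm (fun z => F N z - f z) 1 μ = A N + C N := by
    intro N
    rw [← ha_eq N]
    exact (eLpNorm_sub_comm f (F N) 1 μ).symm
  -- limsup identities
  have hlimsup_a : Filter.limsup (fun N => eLpNorm (fun z => f z - F N z) 1 μ) atTop
      = Filter.limsup C atTop := by
    simp only [ha_eq]
    simpa using limsup_add_tendsto (a := 0) (by simp) hA0 (v := C)
  have hlimsup_b : Filter.limsup (fun N => eLpNorm (F N) 1 μ) atTop
      = ENNReal.ofReal (c ^ 2) + Filter.limsup C atTop := by
    simp only [hb_eq]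
    exact limsup_add_tendsto ENNReal.ofReal_ne_top hBc
  refine ⟨?_, ?_, ?_⟩
  · rw [hlimsup_a, hlimsup_b, ENNReal.add_sub_cancel_left ENNReal.ofReal_ne_top]
  · -- L¹ convergence → mass convergence
    intro h
    have hC0 : Tendsto C atTop (𝓝 0) := by
      have h' : Tendsto (fun N => A N + C N) atTop (𝓝 0) := (tendsto_congr ha_eq').mp h
      exact tendsto_of_tendsto_of_tendsto_of_le_of_le tendsto_const_nhds h'
        (fun N => zero_le) (fun N => le_add_self)
    have : Tendsto (fun N => B N + C N) atTop (𝓝 (ENNReal.ofReal (c ^ 2) + 0)) :=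
      Tendsto.add hBc hC0
    simpa [hb_eq] using this
  · -- mass convergence → L¹ convergence
    intro h
    have hBfin : ∀ N, B N ≠ ⊤ := fun N => ((hB_le N).trans_lt (by simp)).ne
    have hCeq : ∀ N, C N = eLpNorm (F N) 1 μ - B N := by
      intro N
      rw [hb_eq N, ENNReal.add_sub_cancel_left (hBfin N)]
    have hC0 : Tendsto C atTop (𝓝 0) := by
      have := ENNReal.Tendsto.sub h hBc (Or.inr ENNReal.ofReal_ne_top)
      simpa [← hCeq, tsub_self] using this
    have : Tendsto (fun N => A N + C N) atTop (𝓝 (0 + 0)) := Tendsto.add hA0 hC0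
    simpa [ha_eq'] using this
end
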